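/- Let z be an integer that is a perfect square, and suppose a root of unity θ with θ ≠ ±1 satisfies zθ² + (4 − z)θ + z = 0. Then z = 4 and θ² + 1 = 0, i.e., θ is a primitive fourth root of unity. -/

import Mathlib

theorem stmt_6 (z : ℤ) (hsq : ∃ m : ℤ, z = m ^ 2) (θ : ℂ) (k : ℕ) (hk : 0 < k)
    (hroot : θ ^ k = 1) (h1 : θ ≠ 1) (h2 : θ ≠ -1)
    (heq : (z : ℂ) * θ ^ 2 + (4 - (z : ℂ)) * θ + (z : ℂ) = 0) :
    z = 4 ∧ θ ^ 2 + 1 = 0 := by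
  obtain ⟨m, hm⟩ := hsq
  have hθ0 : θ ≠ 0 := by
    intro h
    rw [h, zero_pow hk.ne'] at hroot
    exact zero_ne_one hroot
  have habs : ‖θ‖ = 1 := by
    have h : ‖θ‖ ^ k = 1 := by
      rw [← norm_pow, hroot, norm_one]
    rcases (pow_eq_one_iff_cases (n := k) (a := ‖θ‖)).mp h with h' | h' | h'
    · omega
    · exact h'
    · obtain ⟨h', _⟩ := h'; nlinarith [norm_nonneg θ]
  have hz0 : z ≠ 0 := by
    intro h
    rw [h] at heq
    push_cast at heq
    have : (4 : ℂ) * θ = 0 := by linear_combination heq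
    rcases mul_eq_zero.mp this with h' | h'
    · norm_num at h'
    · exact hθ0 h'
  have hzC : (z : ℂ) ≠ 0 := Int.cast_ne_zero.mpr hz0
  -- θ is an algebraic integer
  have hint : IsIntegral ℤ θ := by
    refine ⟨Polynomial.X ^ k - Polynomial.C 1, Polynomial.monic_X_pow_sub_C 1 hk.ne', ?_⟩
    simp [hroot]
  have hinv : IsIntegral ℤ θ⁻¹ := by
    have : θ⁻¹ = θ ^ (k - 1) := by
      apply inv_eq_of_mul_eq_one_right
      calc θ * θ ^ (k-1) = θ ^ k := by
            rw [← pow_succ']; congr 1; omega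
        _ = 1 := hroot
    rw [this]
    exact hint.pow _
  have hc : θ + θ⁻¹ = ((z : ℂ) - 4) / z := by
    rw [eq_div_iff hzC]
    field_simp
    linear_combination heq
  -- the rational (z-4)/z is an algebraic integer, hence an integer
  set q : ℚ := ((z : ℚ) - 4) / z with hq
  have hqC : (algebraMap ℚ ℂ) q = θ + θ⁻¹ := by
    rw [hc, hq]
    push_cast
    simp
  have hqint : IsIntegral ℤ q := by
    rw [← isIntegral_algebraMap_iff (B := ℂ) (algebraMap ℚ ℂ).injective, hqC]
    exact hint.add hinv
  obtain ⟨a, ha⟩ := IsIntegrallyClosed.isIntegral_iff.mp hqint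
  have hza : (a : ℚ) * z = z - 4 := by
    have h' : (a : ℚ) = ((z : ℚ) - 4) / z := by rw [← hq, ← ha]; simp
    rw [h']
    field_simp
  have hzaZ : a * z = z - 4 := by exact_mod_cast hza
  have hdvd : z ∣ 4 := ⟨1 - a, by linarith [hzaZ]⟩
  have hzpos : 0 < z := lt_of_le_of_ne (hm ▸ sq_nonneg m) (Ne.symm hz0)
  have hzle : z ≤ 4 := Int.le_of_dvd (by norm_num) hdvd
  interval_cases z
  · -- z = 1 : then a = -3 and θ + θ⁻¹ = -3, impossible since |θ| = 1
    exfalso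
    have ha3 : a = -3 := by omega
    have h3 : θ + θ⁻¹ = -3 := by
      rw [hc]; norm_num
    have hb : ‖θ + θ⁻¹‖ ≤ 2 := by
      calc ‖θ + θ⁻¹‖ ≤ ‖θ‖ + ‖θ⁻¹‖ :=
            norm_add_le _ _
        _ = 2 := by rw [norm_inv, habs]; norm_num
    rw [h3] at hb
    simp at hb
    norm_num at hb
  · -- z = 2 : not a perfect square
    exfalso
    have h1' : m ≤ 1 := by nlinarith
    have h2' : -1 ≤ m := by nlinarith
    interval_cases m <;> omega
  · -- z = 3 : does not divide 4
    exfalso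
    omega
  · -- z = 4
    refine ⟨rfl, ?_⟩
    push_cast at heq
    linear_combination heq / 4
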